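/- Let P be a partial monoid and let ⋆ be the operation on Irr(P) given by u ⋆ v = lstd(u·v). Then ⋆ is associative (i.e. (u ⋆ v) ⋆ w = u ⋆ (v ⋆ w) for all u, v, w ∈ Irr(P)) if and only if the semi-Thue system R_P is confluent. -/

import Mathlib

/-- A partial monoid: a type `P` with a partial multiplication (encoded as a total
function `mul` together with a domain predicate `dom`; the value of `mul` is only
meaningful on `dom`) and a total identity `one`. -/
structure PartialMonoid (P : Type*) where
  dom : P → P → Prop
  mul : P → P → P
  one : P
  dom_one_right : ∀ x, dom x one
  dom_one_left : ∀ x, dom one x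
  mul_one : ∀ x, mul x one = x
  one_mul : ∀ x, mul one x = x
  dom_assoc : ∀ x y z, (dom x y ∧ dom (mul x y) z) ↔ (dom y z ∧ dom x (mul y z))
  mul_assoc : ∀ x y z, dom x y → dom (mul x y) z → mul (mul x y) z = mul x (mul y z)

/-- One-step reduction `⇒_R` of the semi-Thue system `R_P` associated with the
partial monoid `P`: contract a composable factor `x·y` to `x×y`, or erase a
letter `1_P`. -/
inductive Red {P : Type*} (M : PartialMonoid P) : List P → List P → Prop
  | mul (u v : List P) (x y : P) (h : M.dom x y) :
      Red M (u ++ x :: y :: v) (u ++ M.mul x y :: v)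
  | one (u v : List P) : Red M (u ++ M.one :: v) (u ++ v)

/-- A word is irreducible (a normal form) if no one-step reduction applies to it. -/
def Irr {P : Type*} (M : PartialMonoid P) (w : List P) : Prop :=
  ¬ ∃ w', Red M w w'

/-- Confluence of a relation. -/
def Confluent {α : Type*} (r : α → α → Prop) : Prop :=
  ∀ a b c, Relation.ReflTransGen r a b → Relation.ReflTransGen r a c →
    ∃ d, Relation.ReflTransGen r b d ∧ Relation.ReflTransGen r c d

/-- The left standard reduction `lst(R)` on words over `P`:
(i) erase an occurrence of `1_P`;
(ii) for a non-irreducible word over `P∖{1_P}` whose leftmost composable pair `(x,y)`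
occurs at the start and satisfies `x×y = 1_P`, erase the factor `x·y`;
(iii) for a non-irreducible word `u·x·y·v` over `P∖{1_P}` whose leftmost composable
pair is `(x,y)` (no two consecutive letters of `u·x` are composable) with
`x×y ≠ 1_P`, contract the factor `x·y` to `x×y`. -/
inductive LstRed {P : Type*} (M : PartialMonoid P) : List P → List P → Prop
  | erase (u v : List P) : LstRed M (u ++ M.one :: v) (u ++ v)
  | cancel (x y : P) (v : List P)
      (hno : ∀ a ∈ x :: y :: v, a ≠ M.one)
      (hdom : M.dom x y) (hone : M.mul x y = M.one) :
      LstRed M (x :: y :: v) v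
  | contract (u : List P) (x y : P) (v : List P)
      (hno : ∀ a ∈ u ++ x :: y :: v, a ≠ M.one)
      (hdom : M.dom x y) (hone : M.mul x y ≠ M.one)
      (hleft : List.Chain' (fun a b => ¬ M.dom a b) (u ++ [x])) :
      LstRed M (u ++ x :: y :: v) (u ++ M.mul x y :: v)

namespace StarAux
open Relation List
variable {P : Type*} {M : PartialMonoid P}

/-- Every lst-step is a sequence of Red-steps. -/
lemma lst_to_red {a b : List P} (h : LstRed M a b) : ReflTransGen (Red M) a b := by
  cases h with
  | erase u v => exact ReflTransGen.single (Red.one u v)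
  | cancel x y v hno hdom hone =>
      refine ReflTransGen.head (Red.mul [] _ x y hdom) ?_
      rw [hone]
      exact ReflTransGen.single (Red.one ([] : List P) _)
  | contract u x y v hno hdom hone hleft =>
      exact ReflTransGen.single (Red.mul u _ x y hdom)

lemma lstRT_to_red {a b : List P} (h : ReflTransGen (LstRed M) a b) :
    ReflTransGen (Red M) a b := by
  induction h with
  | refl => exact ReflTransGen.refl
  | tail _ h ih => exact ih.trans (lst_to_red h)

/-- If a one-free word has a composable adjacent pair, there is an lst-step. -/
lemma exists_lst_of_pair : ∀ (w : List P), (∀ c ∈ w, c ≠ M.one) →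
    (∃ u x y v, w = u ++ x :: y :: v ∧ M.dom x y) → ∃ w', LstRed M w w' := by
  intro w
  induction w with
  | nil =>
      rintro _ ⟨u, x, y, v, h, -⟩
      simp at h
  | cons a t ih =>
      intro hno hpair
      by_cases hstep : ∃ b t', t = b :: t' ∧ M.dom a b
      · obtain ⟨b, t', rfl, hab⟩ := hstep
        by_cases hone : M.mul a b = M.one
        · exact ⟨t', LstRed.cancel a b t' hno hab hone⟩
        · exact ⟨M.mul a b :: t',
            LstRed.contract [] a b t' hno hab hone (List.isChain_singleton _)⟩
      · push_neg at hstep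
        obtain ⟨u, x, y, v, hw, hdom⟩ := hpair
        obtain ⟨u', hteq⟩ : ∃ u', t = u' ++ x :: y :: v := by
          cases u with
          | nil =>
              simp only [nil_append, cons.injEq] at hw
              obtain ⟨rfl, rfl⟩ := hw
              exact absurd hdom (hstep y v rfl)
          | cons a0 u' =>
              simp only [cons_append, cons.injEq] at hw
              exact ⟨u', hw.2⟩
        have hnot : ∀ c ∈ t, c ≠ M.one := fun c hc => hno c (mem_cons_of_mem a hc)
        obtain ⟨t2, hstep2⟩ := ih hnot ⟨u', x, y, v, hteq, hdom⟩
        clear hteq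
        cases hstep2 with
        | erase u2 v2 => exact absurd rfl (hnot M.one (by simp))
        | cancel x2 y2 v2 hno2 hdom2 hone2 =>
            exfalso
            have hax : M.dom a x2 :=
              ((M.dom_assoc a x2 y2).mpr
                ⟨hdom2, by rw [hone2]; exact M.dom_one_right a⟩).1
            exact hstep x2 (y2 :: t2) rfl hax
        | contract u2 x2 y2 v2 hno2 hdom2 hone2 hleft2 =>
            refine ⟨(a :: u2) ++ M.mul x2 y2 :: v2, ?_⟩
            rw [show a :: (u2 ++ x2 :: y2 :: v2) = (a :: u2) ++ x2 :: y2 :: v2 from rfl]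
            refine LstRed.contract (a :: u2) x2 y2 v2 ?_ hdom2 hone2 ?_
            · intro c hc
              exact hno c (by simpa using hc)
            · cases u2 with
              | nil =>
                  exact List.isChain_cons_cons.mpr ⟨hstep x2 (y2 :: v2) rfl, by simp⟩
              | cons c u3 =>
                  rw [show ((a :: c :: u3) ++ [x2]) = a :: ((c :: u3) ++ [x2]) from rfl]
                  exact List.isChain_cons_cons.mpr
                    ⟨hstep c (u3 ++ x2 :: y2 :: v2) rfl, hleft2⟩

/-- Irr coincides with being an LstRed-normal form. -/
lemma irr_iff_lstnf (w : List P) : Irr M w ↔ ¬ ∃ w', LstRed M w w' := by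
  constructor
  · intro h hex
    obtain ⟨w', hw'⟩ := hex
    apply h
    cases hw' with
    | erase u v => exact ⟨u ++ v, Red.one u v⟩
    | cancel x y v hno hdom hone => exact ⟨_, Red.mul [] _ x y hdom⟩
    | contract u x y v hno hdom hone hleft => exact ⟨_, Red.mul u _ x y hdom⟩
  · intro h hex
    apply h
    obtain ⟨w', hw'⟩ := hex
    cases hw' with
    | one u v => exact ⟨u ++ v, LstRed.erase u v⟩
    | mul u v x y hdom =>
        by_cases hone : ∀ c ∈ u ++ x :: y :: v, c ≠ M.one
        · exact exists_lst_of_pair _ hone ⟨u, x, y, v, rfl, hdom⟩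
        · push_neg at hone
          obtain ⟨c, hc, rfl⟩ := hone
          obtain ⟨s, t, hst⟩ := List.append_of_mem hc
          rw [hst]
          exact ⟨s ++ t, LstRed.erase s t⟩


lemma contract_unique_aux {u u' v v' : List P} {x y x' y' : P}
    (heq : u ++ x :: y :: v = u' ++ x' :: y' :: v')
    (hch : List.Chain' (fun a b => ¬ M.dom a b) (u' ++ [x']))
    (hdom : M.dom x y) : ¬ (u.length < u'.length) := by
  intro hlt
  have hpre1 : (u ++ [x, y]) <+: (u ++ x :: y :: v) := ⟨v, by simp⟩
  have hpre2 : (u' ++ [x']) <+: (u ++ x :: y :: v) := ⟨y' :: v', by rw [heq]; simp⟩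
  have hle : (u ++ [x, y]).length ≤ (u' ++ [x']).length := by
    simp only [List.length_append, List.length_cons, List.length_nil]
    omega
  have hpre : (u ++ [x, y]) <+: (u' ++ [x']) :=
    List.prefix_of_prefix_length_le hpre1 hpre2 hle
  have hch3 : List.Chain' (fun a b => ¬ M.dom a b) [x, y] :=
    (hch.prefix hpre).suffix ⟨u, rfl⟩
  exact (List.isChain_cons_cons.mp hch3).1 hdom

lemma cancel_contract_aux {x y : P} {v u' v' : List P} {x' y' : P}
    (heq : x :: y :: v = u' ++ x' :: y' :: v')
    (hch : List.Chain' (fun a b => ¬ M.dom a b) (u' ++ [x']))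
    (hdom : M.dom x y) (hone : M.mul x y = M.one) (hone' : M.mul x' y' ≠ M.one) :
    False := by
  cases u' with
  | nil =>
      simp only [List.nil_append, List.cons.injEq] at heq
      obtain ⟨rfl, rfl, -⟩ := heq
      exact hone' hone
  | cons a0 u2 =>
      simp only [List.cons_append, List.cons.injEq] at heq
      obtain ⟨rfl, heq2⟩ := heq
      cases u2 with
      | nil =>
          simp only [List.nil_append, List.cons.injEq] at heq2
          obtain ⟨rfl, -⟩ := heq2
          exact (List.isChain_cons_cons.mp hch).1 hdom
      | cons b0 u3 =>
          simp only [List.cons_append, List.cons.injEq] at heq2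
          obtain ⟨rfl, -⟩ := heq2
          exact (List.isChain_cons_cons.mp hch).1 hdom

/-- Strong local confluence of the left standard reduction. -/
lemma lst_local {a b c : List P} (h1 : LstRed M a b) (h2 : LstRed M a c) :
    b = c ∨ ∃ d, LstRed M b d ∧ LstRed M c d := by
  cases h1 with
  | erase u v =>
      generalize hE : u ++ M.one :: v = a0 at h2
      cases h2 with
      | erase u' v' =>
          rcases List.append_eq_append_iff.mp hE with ⟨m, hm1, hm2⟩ | ⟨m, hm1, hm2⟩
          · cases m with
            | nil =>
                simp only [List.append_nil] at hm1
                simp only [List.nil_append, List.cons.injEq] at hm2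
                subst hm1
                rw [hm2.2]
                exact Or.inl rfl
            | cons h0 m' =>
                simp only [List.cons_append, List.cons.injEq] at hm2
                obtain ⟨rfl, rfl⟩ := hm2
                subst hm1
                refine Or.inr ⟨(u ++ m') ++ v', ?_, ?_⟩
                · simpa using LstRed.erase (M := M) (u ++ m') v'
                · simpa using LstRed.erase (M := M) u (m' ++ v')
          · cases m with
            | nil =>
                simp only [List.append_nil] at hm1
                simp only [List.nil_append, List.cons.injEq] at hm2
                subst hm1
                rw [hm2.2]
                exact Or.inl rfl
            | cons h0 m' =>
                simp only [List.cons_append, List.cons.injEq] at hm2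
                obtain ⟨rfl, rfl⟩ := hm2
                subst hm1
                refine Or.inr ⟨(u' ++ m') ++ v, ?_, ?_⟩
                · simpa using LstRed.erase (M := M) u' (m' ++ v)
                · simpa using LstRed.erase (M := M) (u' ++ m') v
      | cancel x' y' v' hno' hdom' hone' =>
          exact absurd rfl (hno' M.one (hE ▸ (by simp : M.one ∈ u ++ M.one :: v)))
      | contract u' x' y' v' hno' hdom' hone' hleft' =>
          exact absurd rfl (hno' M.one (hE ▸ (by simp : M.one ∈ u ++ M.one :: v)))
  | cancel x y v hno hdom hone =>
      generalize hE : x :: y :: b = a0 at h2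
      cases h2 with
      | erase u' v' =>
          exact absurd rfl (hno M.one (hE ▸ (by simp : M.one ∈ u' ++ M.one :: v')))
      | cancel x' y' v' hno' hdom' hone' =>
          simp only [List.cons.injEq] at hE
          exact Or.inl hE.2.2
      | contract u' x' y' v' hno' hdom' hone' hleft' =>
          exact (cancel_contract_aux hE hleft' hdom hone hone').elim
  | contract u x y v hno hdom hone hleft =>
      generalize hE : u ++ x :: y :: v = a0 at h2
      cases h2 with
      | erase u' v' =>
          exact absurd rfl (hno M.one (hE ▸ (by simp : M.one ∈ u' ++ M.one :: v')))
      | cancel x' y' v' hno' hdom' hone' =>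
          exact (cancel_contract_aux hE.symm hleft hdom' hone' hone).elim
      | contract u' x' y' v' hno' hdom' hone' hleft' =>
          have hl1 := contract_unique_aux hE hleft' hdom
          have hl2 := contract_unique_aux hE.symm hleft hdom'
          have hlen : u.length = u'.length := by omega
          obtain ⟨rfl, heq2⟩ := List.append_inj hE hlen
          simp only [List.cons.injEq] at heq2
          obtain ⟨rfl, rfl, rfl⟩ := heq2
          exact Or.inl rfl

/-- Strong confluence hypothesis for church_rosser. -/
lemma lst_strong (a b c : List P) (h1 : LstRed M a b) (h2 : LstRed M a c) :
    ∃ d, Relation.ReflGen (LstRed M) b d ∧ ReflTransGen (LstRed M) c d := by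
  rcases lst_local h1 h2 with rfl | ⟨d, hd1, hd2⟩
  · exact ⟨b, Relation.ReflGen.refl, ReflTransGen.refl⟩
  · exact ⟨d, Relation.ReflGen.single hd1, ReflTransGen.single hd2⟩


section NF
variable (lstd : List P → List P)
  (hl : ∀ w : List P,
      ReflTransGen (LstRed M) w (lstd w) ∧ ¬ ∃ w', LstRed M (lstd w) w')

include hl

/-- normal forms absorb reductions -/
lemma rtg_nf_eq {a b : List P} (h : ReflTransGen (LstRed M) a b) :
    lstd a = lstd b := by
  obtain ⟨d, hd1, hd2⟩ :=
    Relation.church_rosser (fun a b c => lst_strong a b c)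
      (hl a).1 (h.trans (hl b).1)
  have e1 : lstd a = d := by
    rcases hd1.cases_head with rfl | ⟨c, hc, -⟩
    · rfl
    · exact absurd ⟨c, hc⟩ (hl a).2
  have e2 : lstd b = d := by
    rcases hd2.cases_head with rfl | ⟨c, hc, -⟩
    · rfl
    · exact absurd ⟨c, hc⟩ (hl b).2
  rw [e1, e2]

lemma nf_fix {w : List P} (hw : ¬ ∃ w', LstRed M w w') : lstd w = w := by
  rcases (hl w).1.cases_head with h | ⟨c, hc, -⟩
  · exact h.symm
  · exact absurd ⟨c, hc⟩ hw

lemma nf_nil : lstd ([] : List P) = [] := by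
  refine nf_fix lstd hl ?_
  rintro ⟨w', hw'⟩
  generalize hE : ([] : List P) = a0 at hw'
  cases hw' <;> simp_all

omit hl in
lemma nostep_single {z : P} (hz : z ≠ M.one) : ¬ ∃ w', LstRed M [z] w' := by
  rintro ⟨w', hw'⟩
  generalize hE : [z] = a0 at hw'
  cases hw' with
  | erase u v => cases u <;> simp_all
  | cancel x y v hno hdom hone => simp_all
  | contract u x y v hno hdom hone hleft => cases u <;> simp_all

lemma nf_single {z : P} (hz : z ≠ M.one) : lstd [z] = [z] :=
  nf_fix lstd hl (nostep_single (M := M) hz)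

end NF

/-- appending a one-free word on the right preserves lst-steps -/
lemma lst_append_right {a b : List P} (t : List P)
    (ht : ∀ c ∈ t, c ≠ M.one) (h : LstRed M a b) : LstRed M (a ++ t) (b ++ t) := by
  cases h with
  | erase u v =>
      have := LstRed.erase (M := M) u (v ++ t)
      simpa using this
  | cancel x y v hno hdom hone =>
      have hno2 : ∀ c ∈ x :: y :: (b ++ t), c ≠ M.one := by
        intro c hc
        simp only [List.mem_cons, List.mem_append] at hc
        rcases hc with rfl | rfl | hc | hc
        · exact hno _ (by simp)
        · exact hno _ (by simp)
        · exact hno _ (by simp [hc])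
        · exact ht _ hc
      have := LstRed.cancel (M := M) x y (b ++ t) hno2 hdom hone
      simpa using this
  | contract u x y v hno hdom hone hleft =>
      have hno2 : ∀ c ∈ u ++ x :: y :: (v ++ t), c ≠ M.one := by
        intro c hc
        simp only [List.mem_append, List.mem_cons] at hc
        rcases hc with hc | rfl | rfl | hc | hc
        · exact hno _ (by simp [hc])
        · exact hno _ (by simp)
        · exact hno _ (by simp)
        · exact hno _ (by simp [hc])
        · exact ht _ hc
      have := LstRed.contract (M := M) u x y (v ++ t) hno2 hdom hone hleft
      simpa using this

lemma lstRT_append_right {a b : List P} (t : List P)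
    (ht : ∀ c ∈ t, c ≠ M.one) (h : ReflTransGen (LstRed M) a b) :
    ReflTransGen (LstRed M) (a ++ t) (b ++ t) := by
  induction h with
  | refl => exact ReflTransGen.refl
  | tail _ h ih => exact ih.tail (lst_append_right t ht h)

/-- a word reduces, in any left context, to a one-free word (uniformly). -/
lemma erase_ones (t : List P) :
    ∃ t', (∀ c ∈ t', c ≠ M.one) ∧
      ∀ w : List P, ReflTransGen (LstRed M) (w ++ t) (w ++ t') := by
  induction t with
  | nil => exact ⟨[], by simp, fun w => ReflTransGen.refl⟩
  | cons c t ih =>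
      obtain ⟨t', ht', hred⟩ := ih
      by_cases hc : c = M.one
      · subst hc
        refine ⟨t', ht', fun w => ?_⟩
        exact ReflTransGen.head (LstRed.erase w t) (hred w)
      · refine ⟨c :: t', by simp [hc]; exact ht', fun w => ?_⟩
        have := hred (w ++ [c])
        simpa using this


lemma red_append_right {a b : List P} (t : List P) (h : Red M a b) :
    Red M (a ++ t) (b ++ t) := by
  cases h with
  | mul u v x y hdom => simpa using Red.mul u (v ++ t) x y hdom
  | one u v => simpa using Red.one u (v ++ t)

lemma red_append_left {a b : List P} (s : List P) (h : Red M a b) :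
    Red M (s ++ a) (s ++ b) := by
  cases h with
  | mul u v x y hdom => simpa using Red.mul (s ++ u) v x y hdom
  | one u v => simpa using Red.one (s ++ u) v

lemma redRT_append_right {a b : List P} (t : List P)
    (h : ReflTransGen (Red M) a b) : ReflTransGen (Red M) (a ++ t) (b ++ t) := by
  induction h with
  | refl => exact ReflTransGen.refl
  | tail _ h ih => exact ih.tail (red_append_right t h)

lemma redRT_append_left {a b : List P} (s : List P)
    (h : ReflTransGen (Red M) a b) : ReflTransGen (Red M) (s ++ a) (s ++ b) := by
  induction h with
  | refl => exact ReflTransGen.refl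
  | tail _ h ih => exact ih.tail (red_append_left s h)

lemma irr_rt_eq {n d : List P} (hn : Irr M n)
    (h : ReflTransGen (Red M) n d) : n = d := by
  rcases h.cases_head with rfl | ⟨c, hc, -⟩
  · rfl
  · exact absurd ⟨c, hc⟩ hn

section Main
variable (lstd : List P → List P)
  (hl : ∀ w : List P,
      ReflTransGen (LstRed M) w (lstd w) ∧ ¬ ∃ w', LstRed M (lstd w) w')

include hl

/-- E1: the normal form of `w ++ t` only depends on `w` through `lstd w`. -/
lemma lstd_append (w t : List P) : lstd (w ++ t) = lstd (lstd w ++ t) := by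
  obtain ⟨t', ht', hred⟩ := erase_ones (M := M) t
  have h1 := rtg_nf_eq lstd hl (hred w)
  have h2 := rtg_nf_eq lstd hl (hred (lstd w))
  have h3 := rtg_nf_eq lstd hl (lstRT_append_right t' ht' (hl w).1)
  rw [h1, h3, ← h2]

lemma lstd_pair {x y : P} (hx : x ≠ M.one) (hy : y ≠ M.one) (hdom : M.dom x y) :
    lstd [x, y] = lstd [M.mul x y] := by
  by_cases hxy : M.mul x y = M.one
  · have s1 : LstRed M [x, y] [] :=
      LstRed.cancel x y [] (by simp [hx, hy]) hdom hxy
    have s2 : LstRed M [M.mul x y] [] := by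
      rw [hxy]; simpa using LstRed.erase (M := M) [] []
    rw [rtg_nf_eq lstd hl (ReflTransGen.single s1),
        rtg_nf_eq lstd hl (ReflTransGen.single s2)]
  · have s1 : LstRed M [x, y] [M.mul x y] := by
      simpa using LstRed.contract (M := M) [] x y [] (by simp [hx, hy]) hdom hxy (List.isChain_singleton _)
    exact rtg_nf_eq lstd hl (ReflTransGen.single s1)

/-- key step: lstd is invariant under one-step Red, given associativity. -/
lemma red_lstd
    (hassoc : ∀ u v w : List P, Irr M u → Irr M v → Irr M w →
      lstd (lstd (u ++ v) ++ w) = lstd (u ++ lstd (v ++ w)))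
    {a b : List P} (h : Red M a b) : lstd a = lstd b := by
  cases h with
  | one u v => exact rtg_nf_eq lstd hl (ReflTransGen.single (LstRed.erase u v))
  | mul u v x y hdom =>
      by_cases hx : x = M.one
      · subst hx
        rw [M.one_mul]
        exact rtg_nf_eq lstd hl (ReflTransGen.single (LstRed.erase u (y :: v)))
      · by_cases hy : y = M.one
        · subst hy
          rw [M.mul_one]
          have s1 : LstRed M ((u ++ [x]) ++ M.one :: v) ((u ++ [x]) ++ v) :=
            LstRed.erase (u ++ [x]) v
          have := rtg_nf_eq lstd hl (ReflTransGen.single s1)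
          simpa using this
        · -- main case
          have hIu : Irr M (lstd u) := (irr_iff_lstnf _).mpr (hl u).2
          have hIx : Irr M [x] := (irr_iff_lstnf _).mpr (nostep_single (M := M) hx)
          have hIy : Irr M [y] := (irr_iff_lstnf _).mpr (nostep_single (M := M) hy)
          have key := hassoc (lstd u) [x] [y] hIu hIx hIy
          have e1 : lstd (u ++ x :: y :: v) =
              lstd (lstd (lstd (u ++ [x]) ++ [y]) ++ v) := by
            calc lstd (u ++ x :: y :: v)
                = lstd ((u ++ [x]) ++ (y :: v)) := by simp
              _ = lstd (lstd (u ++ [x]) ++ (y :: v)) := lstd_append lstd hl _ _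
              _ = lstd ((lstd (u ++ [x]) ++ [y]) ++ v) := by simp
              _ = lstd (lstd (lstd (u ++ [x]) ++ [y]) ++ v) := lstd_append lstd hl _ _
          have e2 : lstd (u ++ [x]) = lstd (lstd u ++ [x]) := lstd_append lstd hl _ _
          have e3 : lstd [x, y] = lstd [M.mul x y] := lstd_pair lstd hl hx hy hdom
          rw [e1, e2, key]
          have e4 : lstd (lstd (lstd u ++ lstd ([x] ++ [y])) ++ v) =
              lstd ((lstd u ++ lstd [x, y]) ++ v) :=
            (lstd_append lstd hl _ _).symm
          rw [e4, e3]
          by_cases hxy : M.mul x y = M.one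
          · have e5 : lstd [M.mul x y] = ([] : List P) := by
              rw [hxy]
              have := rtg_nf_eq lstd hl
                (ReflTransGen.single (by simpa using LstRed.erase (M := M) [] ([] : List P)))
              rw [this, nf_nil lstd hl]
            rw [e5]
            have e6 : lstd (u ++ M.mul x y :: v) = lstd (lstd u ++ M.one :: v) := by
              rw [hxy]; exact lstd_append lstd hl _ _
            rw [e6]
            have e7 := rtg_nf_eq lstd hl (ReflTransGen.single (LstRed.erase (lstd u) v))
            rw [e7]
            simp
          · have e5 : lstd [M.mul x y] = [M.mul x y] := nf_single lstd hl hxy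
            rw [e5]
            have e6 : lstd (u ++ M.mul x y :: v) = lstd (lstd u ++ M.mul x y :: v) :=
              lstd_append lstd hl _ _
            rw [e6]
            simp

end Main

end StarAux

/-- Let `lstd` send each word to its unique `lst(R)`-normal form and let
`u ⋆ v = lstd(u·v)` for `u, v ∈ Irr(P)`. Then `⋆` is associative on `Irr(P)` if and
only if the semi-Thue system `R_P` is confluent. -/
theorem star_assoc_iff_confluent {P : Type*} (M : PartialMonoid P)
    (lstd : List P → List P)
    (hlstd : ∀ w : List P,
      Relation.ReflTransGen (LstRed M) w (lstd w) ∧ ¬ ∃ w', LstRed M (lstd w) w')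
    (star : List P → List P → List P)
    (hstar : ∀ u v : List P, star u v = lstd (u ++ v)) :
    (∀ u v w : List P, Irr M u → Irr M v → Irr M w →
      star (star u v) w = star u (star v w)) ↔ Confluent (Red M) := by
  constructor
  · -- associativity → confluence
    intro hassoc
    have hassoc' : ∀ u v w : List P, Irr M u → Irr M v → Irr M w →
        lstd (lstd (u ++ v) ++ w) = lstd (u ++ lstd (v ++ w)) := by
      intro u v w hu hv hw
      have := hassoc u v w hu hv hw
      simpa [hstar] using this
    have hred : ∀ a b : List P, Relation.ReflTransGen (Red M) a b → lstd a = lstd b := by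
      intro a b h
      induction h with
      | refl => rfl
      | tail _ h ih => exact ih.trans (StarAux.red_lstd lstd hlstd hassoc' h)
    intro a b c hab hac
    refine ⟨lstd b, StarAux.lstRT_to_red (hlstd b).1, ?_⟩
    have : lstd c = lstd b := by rw [← hred a b hab, ← hred a c hac]
    exact this ▸ StarAux.lstRT_to_red (hlstd c).1
  · -- confluence → associativity
    intro hconf u v w _ _ _
    rw [hstar, hstar, hstar, hstar]
    have r1 : Relation.ReflTransGen (Red M) ((u ++ v) ++ w) (lstd (lstd (u ++ v) ++ w)) :=
      (StarAux.redRT_append_right w (StarAux.lstRT_to_red (hlstd (u ++ v)).1)).trans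
        (StarAux.lstRT_to_red (hlstd _).1)
    have r2 : Relation.ReflTransGen (Red M) ((u ++ v) ++ w) (lstd (u ++ lstd (v ++ w))) := by
      rw [List.append_assoc]
      exact (StarAux.redRT_append_left u (StarAux.lstRT_to_red (hlstd (v ++ w)).1)).trans
        (StarAux.lstRT_to_red (hlstd _).1)
    obtain ⟨d, hd1, hd2⟩ := hconf _ _ _ r1 r2
    have i1 : Irr M (lstd (lstd (u ++ v) ++ w)) := (StarAux.irr_iff_lstnf _).mpr (hlstd _).2
    have i2 : Irr M (lstd (u ++ lstd (v ++ w))) := (StarAux.irr_iff_lstnf _).mpr (hlstd _).2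
    rw [StarAux.irr_rt_eq i1 hd1, StarAux.irr_rt_eq i2 hd2]
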